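/- arXiv:2004.03117 — 2 statements merged into one kernel-verified Lean document; each statement's English description precedes it below -/
import Mathlib

section
/- Fix $n \ge 1$, a real $s > 1$, a sequence $(t_m)$, and $k \ge 1$. Setting $x_j = (j-1)! \big(\sum_{m=1}^n t_m^j m^{-js} - \sum_{m=1}^n (t_m - 1)^j m^{-js}\big)$ for $1 \le j \le k$, one has $\zeta_n^{\vec{t}}(\{s\}_k) = \frac{1}{k!} B_k(x_1, \dots, x_k)$, where $B_k$ is the $k$-th complete Bell polynomial. -/
open Finset

/-- Weakly decreasing `k`-tuples with entries in `{1,…,n}`. -/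
def decTuples (n k : ℕ) : Finset (Fin k → ℕ) :=
  (Fintype.piFinset fun _ : Fin k => Finset.Icc 1 n).filter
    fun f => ∀ i j : Fin k, i ≤ j → f j ≤ f i

/-- Interpolation weight `∏_j t_j^{σ_j(ℓ)}`. -/
def wt (t : ℕ → ℝ) {k : ℕ} (f : Fin k → ℕ) : ℝ :=
  ∏ r ∈ Finset.range k,
    if h : r + 1 < k then
      (if f ⟨r, Nat.lt_of_succ_lt h⟩ = f ⟨r + 1, h⟩ then t (f ⟨r + 1, h⟩) else 1)
    else 1

/-- Truncated multi-interpolated value `ζ_n^{t}({s}_k)`. -/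
noncomputable def zetaTrunc (n k : ℕ) (s : ℝ) (t : ℕ → ℝ) : ℝ :=
  ∑ f ∈ decTuples n k, wt t f * ∏ j : Fin k, ((f j : ℝ) ^ s)⁻¹

/-- The complete Bell polynomials, via the standard recurrence
`B_{n+1}(x) = ∑_{i=0}^n (n choose i) B_{n-i}(x) x_{i+1}`, `B_0 = 1`. -/
noncomputable def bellComplete : ℕ → (ℕ → ℝ) → ℝ
  | 0, _ => 1
  | n + 1, x =>
      ∑ i ∈ Finset.range (n + 1),
        (n.choose i : ℝ) * bellComplete (n - i) x * x (i + 1)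
  termination_by n _ => n
  decreasing_by omega

noncomputable def Zb (k : ℕ) (p : ℕ → ℝ) : ℝ :=
  bellComplete k (fun j => ((j - 1).factorial : ℝ) * p j) / (k.factorial : ℝ)

lemma Zb_zero (p : ℕ → ℝ) : Zb 0 p = 1 := by
  rw [Zb, bellComplete]; simp

lemma Zb_rec (k : ℕ) (p : ℕ → ℝ) :
    ((k : ℝ) + 1) * Zb (k+1) p = ∑ i ∈ range (k+1), Zb (k-i) p * p (i+1) := by
  rw [Zb, bellComplete, Finset.sum_div, Finset.mul_sum]
  refine Finset.sum_congr rfl (fun i hi => ?_)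
  have hik : i ≤ k := by simpa [Nat.lt_succ_iff] using hi
  rw [Zb]
  have h : (k.choose i : ℝ) * (i.factorial : ℝ) * ((k-i).factorial : ℝ) = (k.factorial : ℝ) := by
    exact_mod_cast congrArg (Nat.cast (R := ℝ)) (Nat.choose_mul_factorial_mul_factorial hik)
  have h1 : ((k-i).factorial : ℝ) ≠ 0 := Nat.cast_ne_zero.2 (Nat.factorial_ne_zero _)
  have h2 : ((k+1).factorial : ℝ) ≠ 0 := Nat.cast_ne_zero.2 (Nat.factorial_ne_zero _)
  have h3 : (i + 1 - 1) = i := by omega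
  rw [h3, Nat.factorial_succ (k)]
  push_cast
  field_simp
  linear_combination ((bellComplete (k - i) fun j => ((j - 1).factorial:ℝ) * p j) * p (i+1)) * h


lemma sum_triangle_swap (k : ℕ) (F : ℕ → ℕ → ℝ) :
    ∑ i ∈ range (k+1), ∑ b ∈ range (k-i+1), F i b
      = ∑ b ∈ range (k+1), ∑ i ∈ range (k-b+1), F i b := by
  rw [Finset.sum_sigma', Finset.sum_sigma']
  refine Finset.sum_nbij' (fun p => ⟨p.2, p.1⟩) (fun p => ⟨p.2, p.1⟩) ?_ ?_ ?_ ?_ ?_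
  · rintro ⟨i, b⟩ h; simp only [Finset.mem_sigma, Finset.mem_range] at *; omega
  · rintro ⟨b, i⟩ h; simp only [Finset.mem_sigma, Finset.mem_range] at *; omega
  · rintro ⟨i, b⟩ _; rfl
  · rintro ⟨b, i⟩ _; rfl
  · rintro ⟨i, b⟩ _; rfl

lemma Zb_conv (p q : ℕ → ℝ) (k : ℕ) :
    Zb k (fun j => p j + q j) = ∑ b ∈ range (k+1), Zb b p * Zb (k-b) q := by
  induction k using Nat.strong_induction_on with
  | _ k ih =>
    match k with
    | 0 => simp [Zb_zero]
    | (k+1) =>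
      have hk1 : ((k:ℝ)+1) ≠ 0 := by positivity
      have key : ((k:ℝ)+1) * Zb (k+1) (fun j => p j + q j)
          = ((k:ℝ)+1) * ∑ b ∈ range (k+2), Zb b p * Zb (k+1-b) q := by
        rw [Zb_rec]
        have step1 : ∀ i ∈ range (k+1),
            Zb (k-i) (fun j => p j + q j) * (p (i+1) + q (i+1))
            = (∑ b ∈ range (k-i+1), Zb b p * Zb (k-i-b) q * p (i+1))
              + (∑ b ∈ range (k-i+1), Zb b p * Zb (k-i-b) q * q (i+1)) := by
          intro i hi
          rw [ih (k-i) (by simp at hi; omega), sum_mul, ← sum_add_distrib]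
          exact Finset.sum_congr rfl (fun b hb => by ring)
        rw [Finset.sum_congr rfl step1, sum_add_distrib]
        -- P part
        have Ppart : ∑ i ∈ range (k+1), ∑ b ∈ range (k-i+1), Zb b p * Zb (k-i-b) q * p (i+1)
            = ∑ d ∈ range (k+1), (((k-d : ℕ) : ℝ)+1) * Zb (k-d+1) p * Zb d q := by
          have refl1 : ∀ i ∈ range (k+1),
              ∑ b ∈ range (k-i+1), Zb b p * Zb (k-i-b) q * p (i+1)
              = ∑ d ∈ range (k-i+1), Zb (k-i-d) p * Zb d q * p (i+1) := by
            intro i hi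
            simp only [mem_range] at hi
            rw [← Finset.sum_range_reflect (fun d => Zb (k-i-d) p * Zb d q * p (i+1)) (k-i+1)]
            refine Finset.sum_congr rfl (fun b hb => ?_)
            simp only [mem_range] at hb
            have e2 : k - i + 1 - 1 - b = k - i - b := by omega
            rw [e2]
            have e3 : k - i - (k - i - b) = b := by omega
            rw [e3]
          rw [Finset.sum_congr rfl refl1,
            sum_triangle_swap k (fun i d => Zb (k-i-d) p * Zb d q * p (i+1))]
          refine Finset.sum_congr rfl (fun d hd => ?_)
          simp only [mem_range] at hd
          have h4 : ∑ i ∈ range (k-d+1), Zb (k-i-d) p * Zb d q * p (i+1)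
              = (∑ i ∈ range ((k-d)+1), Zb ((k-d)-i) p * p (i+1)) * Zb d q := by
            rw [sum_mul]
            refine Finset.sum_congr rfl (fun i hi => ?_)
            simp only [mem_range] at hi
            have h5 : k - i - d = k - d - i := by omega
            rw [h5]; ring
          rw [h4, ← Zb_rec (k-d) p]
        -- Q part
        have Qpart : ∑ i ∈ range (k+1), ∑ b ∈ range (k-i+1), Zb b p * Zb (k-i-b) q * q (i+1)
            = ∑ b ∈ range (k+1), (((k-b : ℕ) : ℝ)+1) * Zb b p * Zb (k-b+1) q := by
          rw [sum_triangle_swap k (fun i b => Zb b p * Zb (k-i-b) q * q (i+1))]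
          refine Finset.sum_congr rfl (fun b hb => ?_)
          simp only [mem_range] at hb
          have h4 : ∑ i ∈ range (k-b+1), Zb b p * Zb (k-i-b) q * q (i+1)
              = (∑ i ∈ range ((k-b)+1), Zb ((k-b)-i) q * q (i+1)) * Zb b p := by
            rw [sum_mul]
            refine Finset.sum_congr rfl (fun i hi => ?_)
            simp only [mem_range] at hi
            have h5 : k - i - b = k - b - i := by omega
            rw [h5]; ring
          rw [h4, ← Zb_rec (k-b) q]; ring
        rw [Ppart, Qpart, add_comm, Finset.mul_sum]
        have rhs : ∀ b ∈ range (k+2), ((k:ℝ)+1) * (Zb b p * Zb (k+1-b) q)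
            = ((k:ℝ)+1-b) * Zb b p * Zb (k+1-b) q + (b:ℝ) * Zb b p * Zb (k+1-b) q := by
          intro b hb; ring
        rw [Finset.sum_congr rfl rhs, sum_add_distrib]
        congr 1
        · -- Qpart matches first RHS part (restricted to range (k+1))
          rw [Finset.sum_range_succ (fun b => ((k:ℝ)+1-b) * Zb b p * Zb (k+1-b) q) (k+1)]
          have hz : ((k:ℝ)+1-((k+1:ℕ):ℝ)) * Zb (k+1) p * Zb (k+1-(k+1)) q = 0 := by
            push_cast; ring
          rw [hz, add_zero]
          refine Finset.sum_congr rfl (fun b hb => ?_)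
          simp only [mem_range] at hb
          have h1 : k + 1 - b = k - b + 1 := by omega
          rw [h1, Nat.cast_sub (by omega : b ≤ k)]
          push_cast; ring
        · -- Ppart matches shifted second RHS part
          rw [Finset.sum_range_succ' (fun b => (b:ℝ) * Zb b p * Zb (k+1-b) q) (k+1)]
          simp only [Nat.cast_zero, zero_mul, add_zero]
          rw [← Finset.sum_range_reflect (fun i => (((i+1:ℕ)):ℝ) * Zb (i+1) p * Zb (k+1-(i+1)) q) (k+1)]
          refine Finset.sum_congr rfl (fun d hd => ?_)
          simp only [mem_range] at hd
          have h1 : k + 1 - 1 - d = k - d := by omega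
          have h2 : k + 1 - (k - d + 1) = d := by omega
          rw [h1, h2]
          norm_cast
      exact mul_left_cancel₀ hk1 key

lemma Zb_single (a T : ℝ) (k : ℕ) :
    Zb k (fun j => (T ^ j - (T-1) ^ j) * a ^ j) = if k = 0 then 1 else T^(k-1) * a^k := by
  induction k using Nat.strong_induction_on with
  | _ k ih =>
    match k with
    | 0 => simp [Zb_zero]
    | (k+1) =>
      have hk1 : ((k:ℝ)+1) ≠ 0 := by positivity
      rw [if_neg (Nat.succ_ne_zero k), Nat.add_sub_cancel]
      have key : ((k:ℝ)+1) * Zb (k+1) (fun j => (T ^ j - (T-1) ^ j) * a ^ j)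
          = ((k:ℝ)+1) * (T^k * a^(k+1)) := by
        rw [Zb_rec, Finset.sum_range_succ]
        have hlast : Zb (k-k) (fun j => (T ^ j - (T-1) ^ j) * a ^ j) = 1 := by
          simp [Zb_zero]
        rw [hlast, one_mul]
        have hterm : ∀ i ∈ range k,
            Zb (k-i) (fun j => (T ^ j - (T-1) ^ j) * a ^ j) * ((T ^ (i+1) - (T-1) ^ (i+1)) * a ^ (i+1))
            = T^k * a^(k+1) - T^(k-1-i) * (T-1)^(i+1) * a^(k+1) := by
          intro i hi
          simp only [mem_range] at hi
          rw [ih (k-i) (by omega)]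
          rw [if_neg (by omega)]
          have e1 : T^(k-i-1) * a^(k-i) * ((T ^ (i+1) - (T-1) ^ (i+1)) * a ^ (i+1))
              = T^(k-i-1) * T^(i+1) * (a^(k-i) * a^(i+1))
                - T^(k-i-1) * (T-1)^(i+1) * (a^(k-i) * a^(i+1)) := by ring
          have e2 : k - i - 1 + (i+1) = k := by omega
          have e3 : k - i + (i+1) = k + 1 := by omega
          have e4 : k - i - 1 = k - 1 - i := by omega
          rw [e1, ← pow_add, ← pow_add, e2, e3, e4]
        rw [Finset.sum_congr rfl hterm, Finset.sum_sub_distrib, Finset.sum_const, card_range]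
        have hgeom : ∑ j ∈ range (k+1), T ^ j * (T-1) ^ (k-j) = T^(k+1) - (T-1)^(k+1) := by
          have := geom_sum₂_mul T (T-1) (k+1)
          simp only [Nat.add_sub_cancel] at this
          rw [show T - (T-1) = 1 from by ring, mul_one] at this
          exact this
        have hrefl : ∑ i ∈ range k, T^(k-1-i) * (T-1)^(i+1) * a^(k+1)
            = (∑ j ∈ range k, T ^ j * (T-1) ^ (k-j)) * a^(k+1) := by
          rw [← Finset.sum_range_reflect (fun j => T ^ j * (T-1) ^ (k-j)) k, sum_mul]
          refine Finset.sum_congr rfl (fun i hi => ?_)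
          simp only [mem_range] at hi
          have e5 : k - (k-1-i) = i + 1 := by omega
          rw [e5]
        have hsum : ∑ j ∈ range k, T ^ j * (T-1) ^ (k-j) = T^(k+1) - (T-1)^(k+1) - T^k := by
          have := Finset.sum_range_succ (fun j => T ^ j * (T-1) ^ (k-j)) k
          rw [hgeom] at this
          simp only [Nat.sub_self, pow_zero, mul_one] at this
          linarith
        rw [hrefl, hsum]
        push_cast
        ring
      exact mul_left_cancel₀ hk1 key
lemma card_filter_coe_lt (k b : ℕ) (hb : b ≤ k) :
    ((univ : Finset (Fin k)).filter fun i : Fin k => (i:ℕ) < b).card = b := by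
  rcases Nat.lt_or_ge b k with h | h
  · have : ((univ : Finset (Fin k)).filter fun i : Fin k => (i:ℕ) < b)
        = Finset.Iio (⟨b, h⟩ : Fin k) := by
      ext i; simp [Fin.lt_def]
    rw [this, Fin.card_Iio]
  · have hbk : b = k := le_antisymm hb h
    have : ((univ : Finset (Fin k)).filter fun i : Fin k => (i:ℕ) < b) = univ := by
      ext i
      simp only [Finset.mem_filter, Finset.mem_univ, true_and, iff_true]
      rw [hbk]; exact i.isLt
    rw [this, card_univ, Fintype.card_fin, hbk]

def cnt (v : ℕ) {k : ℕ} (f : Fin k → ℕ) : ℕ := (univ.filter fun i => f i = v).card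

lemma mem_decTuples {n k : ℕ} {f : Fin k → ℕ} :
    f ∈ decTuples n k ↔ (∀ i, f i ∈ Finset.Icc 1 n) ∧ ∀ i j : Fin k, i ≤ j → f j ≤ f i := by
  simp [decTuples, Fintype.mem_piFinset]

lemma fiber_char {n k b : ℕ} {f : Fin k → ℕ} (hf : f ∈ decTuples (n+1) k)
    (hb : cnt (n+1) f = b) (i : Fin k) : f i = n+1 ↔ (i:ℕ) < b := by
  obtain ⟨hmem, hmono⟩ := mem_decTuples.1 hf
  constructor
  · intro hfi
    have hsub : Finset.Iic i ⊆ univ.filter fun j => f j = n+1 := by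
      intro j hj
      simp only [Finset.mem_Iic] at hj
      simp only [Finset.mem_filter, Finset.mem_univ, true_and]
      have h1 := hmono j i hj
      have h2 := (Finset.mem_Icc.1 (hmem j)).2
      omega
    have := Finset.card_le_card hsub
    rw [Fin.card_Iic] at this
    rw [cnt] at hb
    omega
  · intro hib
    by_contra hne
    have hsub : (univ.filter fun j => f j = n+1) ⊆ Finset.Iio i := by
      intro j hj
      simp only [Finset.mem_filter, Finset.mem_univ, true_and] at hj
      rw [Finset.mem_Iio]
      by_contra hji
      push_neg at hji
      have h1 := hmono i j hji
      have h2 := (Finset.mem_Icc.1 (hmem i)).2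
      omega
    have := Finset.card_le_card hsub
    rw [Fin.card_Iio] at this
    rw [cnt] at hb
    omega


lemma fiber_sum (n b c : ℕ) (s : ℝ) (t : ℕ → ℝ) :
    ∑ f ∈ (decTuples (n+1) (b+c)).filter (fun f => cnt (n+1) f = b),
        (wt t f * ∏ j : Fin (b+c), ((f j : ℝ) ^ s)⁻¹)
      = (if b = 0 then 1 else t (n+1) ^ (b-1) * ((((n:ℕ)+1 : ℝ)) ^ s)⁻¹ ^ b)
          * ∑ g ∈ decTuples n c, wt t g * ∏ j : Fin c, ((g j : ℝ) ^ s)⁻¹ := by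
  rw [Finset.mul_sum]
  refine Finset.sum_nbij'
    (fun f => fun i : Fin c => f (Fin.natAdd b i))
    (fun g => fun i : Fin (b+c) => if h : (i:ℕ) < b then n+1 else g ⟨(i:ℕ) - b, by
      have := i.isLt; omega⟩)
    ?_ ?_ ?_ ?_ ?_
  · -- maps into decTuples n c
    intro f hf
    simp only [Finset.mem_filter] at hf
    obtain ⟨hf1, hf2⟩ := hf
    obtain ⟨hmem, hmono⟩ := mem_decTuples.1 hf1
    refine mem_decTuples.2 ⟨fun i => ?_, fun i j hij => ?_⟩ <;> beta_reduce
    · have h1 := Finset.mem_Icc.1 (hmem (Fin.natAdd b i))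
      have h2 : f (Fin.natAdd b i) ≠ n+1 := by
        intro hEq
        have h3 := (fiber_char hf1 hf2 _).1 hEq
        rw [Fin.coe_natAdd] at h3
        omega
      rw [Finset.mem_Icc]
      omega
    · refine hmono _ _ ?_
      rw [Fin.le_def, Fin.coe_natAdd, Fin.coe_natAdd]
      have := Fin.le_def.1 hij
      omega
  · -- reverse map into fiber
    intro g hg
    obtain ⟨hmem, hmono⟩ := mem_decTuples.1 hg
    refine Finset.mem_filter.2 ⟨mem_decTuples.2 ⟨fun i => ?_, fun i j hij => ?_⟩, ?_⟩ <;> beta_reduce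
    · by_cases h : (i:ℕ) < b
      · rw [dif_pos h, Finset.mem_Icc]; omega
      · rw [dif_neg h]
        have := Finset.mem_Icc.1 (hmem ⟨(i:ℕ) - b, by have := i.isLt; omega⟩)
        rw [Finset.mem_Icc]
        omega
    · by_cases h2 : (j:ℕ) < b
      · have h1 : (i:ℕ) < b := lt_of_le_of_lt (Fin.le_def.1 hij) h2
        rw [dif_pos h1, dif_pos h2]
      · by_cases h1 : (i:ℕ) < b
        · rw [dif_pos h1, dif_neg h2]
          have := Finset.mem_Icc.1 (hmem ⟨(j:ℕ) - b, by have := j.isLt; omega⟩)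
          omega
        · rw [dif_neg h1, dif_neg h2]
          refine hmono _ _ ?_
          rw [Fin.le_def]
          have := Fin.le_def.1 hij
          simp only
          omega
    · -- cnt = b
      rw [cnt]
      have heq : (univ.filter fun i : Fin (b+c) =>
          (if h : (i:ℕ) < b then n+1 else g ⟨(i:ℕ) - b, by have := i.isLt; omega⟩) = n+1)
          = univ.filter fun i : Fin (b+c) => (i:ℕ) < b := by
        ext i
        simp only [Finset.mem_filter, Finset.mem_univ, true_and]
        by_cases h : (i:ℕ) < b
        · rw [dif_pos h]; simp [h]
        · rw [dif_neg h]
          have := Finset.mem_Icc.1 (hmem ⟨(i:ℕ) - b, by have := i.isLt; omega⟩)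
          constructor
          · intro hh; omega
          · intro hh; exact absurd hh h
      rw [heq, card_filter_coe_lt _ _ (Nat.le_add_right b c)]
  · -- left inverse
    intro f hf
    simp only [Finset.mem_filter] at hf
    obtain ⟨hf1, hf2⟩ := hf
    funext i
    beta_reduce
    by_cases h : (i:ℕ) < b
    · rw [dif_pos h]
      exact ((fiber_char hf1 hf2 i).2 h).symm
    · rw [dif_neg h]
      beta_reduce
      congr 1
      apply Fin.ext
      simp only [Fin.coe_natAdd]
      show b + ((i:ℕ) - b) = (i:ℕ)
      omega
  · -- right inverse
    intro g hg
    funext i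
    beta_reduce
    have hni : ¬ ((Fin.natAdd b i : Fin (b+c)) : ℕ) < b := by
      rw [Fin.coe_natAdd]; omega
    rw [dif_neg hni]
    congr 1
    apply Fin.ext
    show ((Fin.natAdd b i : Fin (b+c)) : ℕ) - b = (i:ℕ)
    rw [Fin.coe_natAdd]
    omega
  · -- value equality
    intro f hf
    simp only [Finset.mem_filter] at hf
    obtain ⟨hf1, hf2⟩ := hf
    have hchar := fiber_char hf1 hf2
    have hwt : wt t f = (if b = 0 then 1 else t (n+1) ^ (b-1)) *
        wt t (fun i : Fin c => f (Fin.natAdd b i)) := by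
      rw [wt, Finset.prod_range_add]
      congr 1
      · -- first block
        rcases Nat.eq_zero_or_pos b with hb0 | hbpos
        · subst hb0; simp
        · obtain ⟨b', rfl⟩ : ∃ b', b = b' + 1 := ⟨b - 1, by omega⟩
          rw [if_neg (Nat.succ_ne_zero b'), Finset.prod_range_succ, Nat.add_sub_cancel]
          have hlast : (if h : b' + 1 < b' + 1 + c then
              (if f ⟨b', Nat.lt_of_succ_lt h⟩ = f ⟨b' + 1, h⟩ then t (f ⟨b' + 1, h⟩) else 1)
              else 1) = 1 := by
            by_cases hc : b' + 1 < b' + 1 + c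
            · rw [dif_pos hc]
              have h1 : f ⟨b', Nat.lt_of_succ_lt hc⟩ = n+1 := (hchar _).2 (by simp)
              have h2 : f ⟨b' + 1, hc⟩ ≠ n+1 := by
                intro hEq
                have := (hchar _).1 hEq
                simp only at this
                omega
              rw [if_neg (by rw [h1]; exact fun hh => h2 hh.symm)]
            · rw [dif_neg hc]
          rw [hlast, mul_one]
          have hstep : ∀ r ∈ range b', (if h : r + 1 < b' + 1 + c then
              (if f ⟨r, Nat.lt_of_succ_lt h⟩ = f ⟨r + 1, h⟩ then t (f ⟨r + 1, h⟩) else 1)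
              else 1) = t (n+1) := by
            intro r hr
            simp only [mem_range] at hr
            have hlt : r + 1 < b' + 1 + c := by omega
            rw [dif_pos hlt]
            have h1 : f ⟨r, Nat.lt_of_succ_lt hlt⟩ = n+1 := (hchar _).2 (by simp only; omega)
            have h2 : f ⟨r + 1, hlt⟩ = n+1 := (hchar _).2 (by simp only; omega)
            rw [h1, h2, if_pos rfl]
          rw [Finset.prod_congr rfl hstep, Finset.prod_const, card_range]
      · -- second block
        rw [wt]
        refine Finset.prod_congr rfl (fun r hr => ?_)
        simp only [mem_range] at hr
        by_cases hrc : r + 1 < c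
        · have hlt : b + r + 1 < b + c := by omega
          rw [dif_pos hlt, dif_pos hrc]
          have e1 : f ⟨b + r, Nat.lt_of_succ_lt hlt⟩
              = f (Fin.natAdd b ⟨r, Nat.lt_of_succ_lt hrc⟩) := by
            congr 1
          have e2 : f ⟨b + r + 1, hlt⟩ = f (Fin.natAdd b ⟨r + 1, hrc⟩) := by
            congr 1
          rw [e1, e2]
        · have hlt : ¬ (b + r + 1 < b + c) := by omega
          rw [dif_neg hlt, dif_neg hrc]
    have hprod : (∏ j : Fin (b+c), ((f j : ℝ) ^ s)⁻¹)
        = ((((n:ℕ)+1 : ℝ)) ^ s)⁻¹ ^ b *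
          ∏ j : Fin c, (((f (Fin.natAdd b j) : ℝ)) ^ s)⁻¹ := by
      rw [Fin.prod_univ_add]
      congr 1
      have hcast : ∀ i : Fin b, ((f (Fin.castAdd c i) : ℝ) ^ s)⁻¹
          = ((((n:ℕ)+1 : ℝ)) ^ s)⁻¹ := by
        intro i
        have hv : f (Fin.castAdd c i) = n+1 := by
          refine (hchar _).2 ?_
          rw [Fin.coe_castAdd]
          exact i.isLt
        rw [hv]
        norm_num
      rw [Finset.prod_congr rfl (fun i _ => hcast i), Finset.prod_const, card_univ,
        Fintype.card_fin]
    rw [hwt, hprod]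
    rcases Nat.eq_zero_or_pos b with hb0 | hbpos
    · subst hb0; simp
    · rw [if_neg (by omega), if_neg (by omega)]
      ring

lemma zetaTrunc_succ (n k : ℕ) (s : ℝ) (t : ℕ → ℝ) :
    zetaTrunc (n+1) k s t = ∑ b ∈ range (k+1),
      (if b = 0 then 1 else t (n+1) ^ (b-1) * ((((n:ℕ)+1:ℝ)) ^ s)⁻¹ ^ b)
        * zetaTrunc n (k-b) s t := by
  have hmap : ∀ f ∈ decTuples (n+1) k, cnt (n+1) f ∈ range (k+1) := by
    intro f hf
    simp only [mem_range]
    have h := Finset.card_filter_le (univ : Finset (Fin k)) (fun i => f i = n+1)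
    rw [card_univ, Fintype.card_fin] at h
    rw [cnt]
    omega
  have hsplit := Finset.sum_fiberwise_of_maps_to (g := fun f => cnt (n+1) f)
    (f := fun f => wt t f * ∏ j : Fin k, ((f j : ℝ) ^ s)⁻¹) hmap
  rw [zetaTrunc, ← hsplit]
  refine Finset.sum_congr rfl (fun b hb => ?_)
  simp only [mem_range] at hb
  obtain ⟨c, rfl⟩ : ∃ c, k = b + c := ⟨k - b, by omega⟩
  rw [show b + c - b = c from by omega, zetaTrunc]
  exact fiber_sum n b c s t

lemma zetaTrunc_k0 (n : ℕ) (s : ℝ) (t : ℕ → ℝ) : zetaTrunc n 0 s t = 1 := by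
  rw [zetaTrunc]
  have hd : decTuples n 0 = {![]} := by
    ext f
    simp only [decTuples, Finset.mem_filter, Fintype.mem_piFinset, Finset.mem_singleton]
    constructor
    · rintro -
      exact funext fun i => i.elim0
    · rintro rfl
      exact ⟨fun i => i.elim0, fun i j _ => i.elim0⟩
  rw [hd, Finset.sum_singleton, wt]
  simp

lemma zetaTrunc_n0 (k : ℕ) (hk : k ≠ 0) (s : ℝ) (t : ℕ → ℝ) : zetaTrunc 0 k s t = 0 := by
  rw [zetaTrunc]
  have hd : decTuples 0 k = ∅ := by
    refine Finset.eq_empty_of_forall_notMem (fun f hf => ?_)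
    obtain ⟨hmem, -⟩ := mem_decTuples.1 hf
    have := Finset.mem_Icc.1 (hmem ⟨0, by omega⟩)
    omega
  rw [hd, Finset.sum_empty]

noncomputable def Pfun (n : ℕ) (s : ℝ) (t : ℕ → ℝ) : ℕ → ℝ :=
  fun j => ∑ m ∈ Finset.Icc 1 n, (t m ^ j - (t m - 1) ^ j) * (((m:ℝ) ^ s)⁻¹) ^ j

lemma Zb_eq_zero (k : ℕ) (p : ℕ → ℝ) (hp : ∀ j, p (j+1) = 0) : Zb (k+1) p = 0 := by
  have h := Zb_rec k p
  simp only [hp, mul_zero, Finset.sum_const_zero] at h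
  have hk : ((k:ℝ)+1) ≠ 0 := by positivity
  exact (mul_eq_zero.1 h).resolve_left hk

lemma zetaTrunc_eq_Zb (n k : ℕ) (s : ℝ) (t : ℕ → ℝ) :
    zetaTrunc n k s t = Zb k (Pfun n s t) := by
  induction n generalizing k with
  | zero =>
    have hP : ∀ j, Pfun 0 s t j = 0 := by
      intro j; rw [Pfun]; simp
    match k with
    | 0 => rw [zetaTrunc_k0, Zb_zero]
    | (k+1) =>
      rw [zetaTrunc_n0 (k+1) (Nat.succ_ne_zero k) s t,
        Zb_eq_zero k _ (fun j => hP (j+1))]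
  | succ n ih =>
    rw [zetaTrunc_succ n k s t]
    have hPsucc : Pfun (n+1) s t = fun j =>
        ((t (n+1)) ^ j - (t (n+1) - 1) ^ j) * ((((n:ℕ)+1:ℝ)) ^ s)⁻¹ ^ j + Pfun n s t j := by
      funext j
      rw [Pfun, Pfun, Finset.sum_Icc_succ_top (by omega : 1 ≤ n+1)]
      push_cast
      ring
    rw [hPsucc, Zb_conv]
    refine Finset.sum_congr rfl (fun b hb => ?_)
    rw [ih (k-b), Zb_single]

/-- Bell polynomial expression for truncated multi-interpolated values:
`ζ_n^t({s}_k) = B_k(x_1,…,x_k)/k!` with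
`x_j = (j-1)! (∑_{m=1}^n t_m^j m^{-js} - ∑_{m=1}^n (t_m-1)^j m^{-js})`. -/
theorem zetaTrunc_bell
    (n : ℕ) (hn : 1 ≤ n) (s : ℝ) (hs : 1 < s) (t : ℕ → ℝ) (k : ℕ) (hk : 1 ≤ k) :
    zetaTrunc n k s t
      = (1 / (k.factorial : ℝ)) * bellComplete k (fun j =>
          ((j - 1).factorial : ℝ) *
            ((∑ m ∈ Finset.Icc 1 n, t m ^ j * ((m : ℝ) ^ ((j : ℝ) * s))⁻¹)
              - ∑ m ∈ Finset.Icc 1 n, (t m - 1) ^ j * ((m : ℝ) ^ ((j : ℝ) * s))⁻¹)) := by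
  rw [zetaTrunc_eq_Zb n k s t, Zb, div_eq_mul_inv, mul_comm, ← one_div]
  congr 2
  funext j
  congr 1
  rw [Pfun, ← Finset.sum_sub_distrib]
  refine Finset.sum_congr rfl (fun m hm => ?_)
  simp only [Finset.mem_Icc] at hm
  have hm0 : (0:ℝ) ≤ (m:ℝ) := by positivity
  have hrw : ((m:ℝ) ^ ((j:ℝ) * s))⁻¹ = (((m:ℝ) ^ s)⁻¹) ^ j := by
    rw [mul_comm, Real.rpow_mul hm0, Real.rpow_natCast, inv_pow]
  rw [hrw]
  ring
end

section
/- Let $s > 1$ be real and $(t_m)_{m \ge 1}$ a sequence with $t_m \in [-1, 1]$. Then the infinite product $\prod_{m=1}^{\infty}\big(1 + \frac{m^{-s} z}{1 - m^{-s} t_m z}\big)$ converges for every complex $z$ with $|z| < 1$, and its Taylor coefficient of $z^k$ at $0$ equals $\zeta^{\vec{t}}(\{s\}_k) = \sum_{\ell_1 \ge \cdots \ge \ell_k \ge 1} \vec{t}^{\vec\sigma(\vec\ell)} \prod_{j=1}^k \ell_j^{-s}$, which in particular is a convergent series. -/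
/-- Summand of the multi-interpolated value `ζ^{t}({s}_k)`. -/
noncomputable def zetaTerm (s : ℝ) (t : ℕ → ℝ) {k : ℕ} (f : Fin k → ℕ) : ℝ :=
  if (∀ j, 1 ≤ f j) ∧ (∀ i j : Fin k, i ≤ j → f j ≤ f i) then
    wt t f * ∏ j : Fin k, ((f j : ℝ) ^ s)⁻¹
  else 0

/-- Factor of the infinite product, as a function of `z ∈ ℂ`. -/
noncomputable def prodFactor (s : ℝ) (t : ℕ → ℝ) (z : ℂ) (m : ℕ) : ℂ :=
  if 1 ≤ m then
    1 + (((m : ℝ) ^ s : ℝ) : ℂ)⁻¹ * z / (1 - (((m : ℝ) ^ s : ℝ) : ℂ)⁻¹ * (t m : ℝ) * z)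
  else 1

open Finset Filter Topology

set_option maxHeartbeats 1600000

noncomputable def cc (s : ℝ) (t : ℕ → ℝ) (m j : ℕ) : ℝ :=
  if j = 0 then 1 else ((m:ℝ)^s)⁻¹ * (((m:ℝ)^s)⁻¹ * t m)^(j-1)
noncomputable def czz (s : ℝ) (t : ℕ → ℝ) (z : ℂ) (m j : ℕ) : ℂ :=
  ((cc s t m j : ℝ) : ℂ) * z^j
lemma rpow_inv_le_one {s : ℝ} (hs : 1 < s) (m : ℕ) : ((m:ℝ)^s)⁻¹ ≤ 1 := by
  rcases Nat.eq_zero_or_pos m with h | h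
  · simp [h, Real.zero_rpow (by linarith : s ≠ 0)]
  · have : 1 ≤ (m:ℝ)^s := Real.one_le_rpow (by exact_mod_cast h) (by linarith)
    rw [inv_le_one_iff₀]; right; exact this
lemma q_abs_le {s : ℝ} (hs : 1 < s) {t : ℕ → ℝ} (ht : ∀ m, |t m| ≤ 1) (m : ℕ) :
    |((m:ℝ)^s)⁻¹ * t m| ≤ 1 := by
  rw [abs_mul]
  have h1 : |((m:ℝ)^s)⁻¹| ≤ 1 := by
    rw [abs_of_nonneg (by positivity)]; exact rpow_inv_le_one hs m
  calc |((m:ℝ)^s)⁻¹| * |t m| ≤ 1 * 1 :=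
        mul_le_mul h1 (ht m) (abs_nonneg _) zero_le_one
    _ = 1 := by ring
lemma cc_abs_le {s : ℝ} (hs : 1 < s) (t : ℕ → ℝ) (ht : ∀ m, |t m| ≤ 1) (m j : ℕ) :
    |cc s t m (j+1)| ≤ ((m:ℝ)^s)⁻¹ := by
  have : cc s t m (j+1) = ((m:ℝ)^s)⁻¹ * (((m:ℝ)^s)⁻¹ * t m)^j := by simp [cc]
  rw [this, abs_mul, abs_of_nonneg (by positivity : (0:ℝ) ≤ ((m:ℝ)^s)⁻¹), abs_pow]
  calc ((m:ℝ)^s)⁻¹ * |((m:ℝ)^s)⁻¹ * t m|^j ≤ ((m:ℝ)^s)⁻¹ * 1 := by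
        apply mul_le_mul_of_nonneg_left _ (by positivity)
        exact pow_le_one₀ (abs_nonneg _) (q_abs_le hs ht m)
    _ = _ := mul_one _
lemma hasSum_czz {s : ℝ} (hs : 1 < s) (t : ℕ → ℝ) (ht : ∀ m, |t m| ≤ 1) {z : ℂ}
    (hz : ‖z‖ < 1) (m : ℕ) :
    HasSum (fun j => czz s t z m j) (prodFactor s t z m) := by
  rcases Nat.eq_zero_or_pos m with rfl | hm
  · have h0 : ∀ j : ℕ, czz s t z 0 j = if j = 0 then 1 else 0 := by
      intro j
      rcases Nat.eq_zero_or_pos j with rfl | hj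
      · simp [czz, cc]
      · simp [czz, cc, Nat.pos_iff_ne_zero.mp hj, Real.zero_rpow (by linarith : s ≠ 0)]
    have : HasSum (fun j : ℕ => if j = 0 then (1:ℂ) else 0) 1 :=
      hasSum_ite_eq (0:ℕ) (1:ℂ)
    simpa [prodFactor, funext h0] using this
  · set A : ℂ := (((m:ℝ)^s : ℝ) : ℂ)⁻¹ with hA
    set q : ℂ := A * (t m : ℝ) with hq
    have hAn : ‖A‖ ≤ 1 := by
      rw [hA]
      rw [← Complex.ofReal_inv, Complex.norm_real, Real.norm_eq_abs,
        abs_of_nonneg (by positivity)]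
      exact rpow_inv_le_one hs m
    have hqz : ‖q * z‖ < 1 := by
      have : ‖q‖ ≤ 1 := by
        rw [hq, norm_mul]
        calc ‖A‖ * ‖((t m : ℝ) : ℂ)‖ ≤ 1 * 1 := by
              apply mul_le_mul hAn _ (norm_nonneg _) zero_le_one
              rw [Complex.norm_real, Real.norm_eq_abs]; exact ht m
          _ = 1 := one_mul 1
      calc ‖q * z‖ = ‖q‖ * ‖z‖ := norm_mul _ _
        _ ≤ 1 * ‖z‖ := by apply mul_le_mul_of_nonneg_right this (norm_nonneg _)
        _ < 1 := by simpa using hz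
    have hgeo : HasSum (fun i : ℕ => (q*z)^i) (1 - q*z)⁻¹ :=
      hasSum_geometric_of_norm_lt_one hqz
    have h1 : HasSum (fun i : ℕ => czz s t z m (i+1)) (A * z * (1 - q*z)⁻¹) := by
      have := hgeo.mul_left (A * z)
      convert this using 1
      · rfl
      funext i
      have : cc s t m (i+1) = ((m:ℝ)^s)⁻¹ * (((m:ℝ)^s)⁻¹ * t m)^i := by simp [cc]
      rw [czz, this]
      push_cast
      rw [hq, hA]
      ring
    have h2 := (hasSum_nat_add_iff (f := fun j => czz s t z m j) 1).mp h1
    have hczz0 : czz s t z m 0 = 1 := by simp [czz, cc]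
    rw [Finset.sum_range_one, hczz0] at h2
    have hpf : prodFactor s t z m = A * z * (1 - q*z)⁻¹ + 1 := by
      rw [prodFactor, if_pos (Nat.one_le_iff_ne_zero.mpr (Nat.pos_iff_ne_zero.mp hm)), hA, hq,
        div_eq_mul_inv]
      ring
    rwa [hpf]
lemma norm_czz (s : ℝ) (t : ℕ → ℝ) (z : ℂ) (m j : ℕ) :
    ‖czz s t z m j‖ = |cc s t m j| * ‖z‖^j := by
  rw [czz, norm_mul, norm_pow, Complex.norm_real, Real.norm_eq_abs]
lemma cc_abs_le_one {s : ℝ} (hs : 1 < s) (t : ℕ → ℝ) (ht : ∀ m, |t m| ≤ 1) (m j : ℕ) :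
    |cc s t m j| ≤ 1 := by
  rcases Nat.eq_zero_or_pos j with rfl | hj
  · simp [cc]
  · obtain ⟨i, rfl⟩ := Nat.exists_eq_add_of_le hj
    rw [add_comm]
    exact le_trans (cc_abs_le hs t ht m i) (rpow_inv_le_one hs m)
lemma summable_norm_czz {s : ℝ} (hs : 1 < s) (t : ℕ → ℝ) (ht : ∀ m, |t m| ≤ 1) {z : ℂ}
    (hz : ‖z‖ < 1) (m : ℕ) :
    Summable (fun j => ‖czz s t z m j‖) := by
  apply Summable.of_nonneg_of_le (fun j => norm_nonneg _) (fun j => ?_)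
    (summable_geometric_of_lt_one (norm_nonneg z) hz)
  rw [norm_czz]
  calc |cc s t m j| * ‖z‖^j ≤ 1 * ‖z‖^j :=
        mul_le_mul_of_nonneg_right (cc_abs_le_one hs t ht m j) (by positivity)
    _ = ‖z‖^j := one_mul _
lemma tsum_norm_czz_le {s : ℝ} (hs : 1 < s) (t : ℕ → ℝ) (ht : ∀ m, |t m| ≤ 1) {z : ℂ}
    (hz : ‖z‖ < 1) (m : ℕ) :
    ∑' j, ‖czz s t z m j‖ ≤ 1 + ((m:ℝ)^s)⁻¹ * (‖z‖ * (1 - ‖z‖)⁻¹) := by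
  have hsum := summable_norm_czz hs t ht hz m
  rw [Summable.tsum_eq_zero_add hsum]
  have h0 : ‖czz s t z m 0‖ = 1 := by simp [czz, cc]
  rw [h0]
  have hgsum : Summable (fun j : ℕ => ((m:ℝ)^s)⁻¹ * (‖z‖^j * ‖z‖)) := by
    apply Summable.mul_left
    apply Summable.mul_right
    exact summable_geometric_of_lt_one (norm_nonneg z) hz
  have hle : ∑' j, ‖czz s t z m (j+1)‖ ≤ ∑' j : ℕ, ((m:ℝ)^s)⁻¹ * (‖z‖^j * ‖z‖) := by
    apply Summable.tsum_le_tsum _ (hsum.comp_injective (add_left_injective 1)) hgsum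
    intro j
    simp only [Function.comp_apply]
    rw [norm_czz, pow_succ]
    exact mul_le_mul_of_nonneg_right (cc_abs_le hs t ht m j) (by positivity)
  apply add_le_add_right
  refine le_trans hle ?_
  rw [tsum_mul_left, tsum_mul_right, tsum_geometric_of_lt_one (norm_nonneg z) hz]
  apply mul_le_mul_of_nonneg_left _ (by positivity)
  rw [mul_comm]

def pext (S : Finset ℕ) (p : ↥S → ℕ) (i : ℕ) : ℕ := if h : i ∈ S then p ⟨i, h⟩ else 0
lemma prod_attach_ext {K : Type*} [CommMonoid K] (F : ℕ → ℕ → K) (S : Finset ℕ) (p : ↥S → ℕ) :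
    ∏ m ∈ S.attach, F ↑m (p m) = ∏ i ∈ S, F i (pext S p i) := by
  rw [← Finset.prod_attach S (fun i => F i (pext S p i))]
  apply Finset.prod_congr rfl
  intro m _
  congr 1
  simp [pext]
lemma finDistrib {K : Type*} [NormedField K] [CompleteSpace K] (F : ℕ → ℕ → K)
    (hF : ∀ m, Summable fun j => ‖F m j‖) (S : Finset ℕ) :
    Summable (fun p : ↥S → ℕ => ‖∏ m ∈ S.attach, F ↑m (p m)‖) ∧
      ∑' p : ↥S → ℕ, ∏ m ∈ S.attach, F ↑m (p m) = ∏ m ∈ S, ∑' j, F m j := by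
  classical
  induction S using Finset.induction_on with
  | empty =>
    constructor
    · exact (hasSum_single (f := fun p : ↥(∅ : Finset ℕ) → ℕ => ‖∏ m ∈ attach ∅, F ↑m (p m)‖)
        default (fun b hb => absurd (Subsingleton.elim b default) hb)).summable
    · rw [Finset.prod_empty,
        tsum_eq_single default (fun b hb => absurd (Subsingleton.elim b default) hb)]
      simp
  | @insert a S' ha IH =>
    set e : (↥(insert a S') → ℕ) ≃ ℕ × (↥S' → ℕ) :=
      (Equiv.arrowCongr (Finset.subtypeInsertEquivOption ha) (Equiv.refl ℕ)).trans
        (Equiv.piOptionEquivProd (β := fun _ => ℕ)) with he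
    have hsymm_a : ∀ x : ℕ × (↥S' → ℕ), e.symm x ⟨a, mem_insert_self a S'⟩ = x.1 := by
      intro x
      simp [he, Equiv.arrowCongr, Finset.subtypeInsertEquivOption, Equiv.piOptionEquivProd]
    have hsymm_mem : ∀ (x : ℕ × (↥S' → ℕ)) (i : ℕ) (hi : i ∈ S'),
        e.symm x ⟨i, mem_insert_of_mem hi⟩ = x.2 ⟨i, hi⟩ := by
      intro x i hi
      have hia : i ≠ a := fun h => ha (h ▸ hi)
      simp [he, Equiv.arrowCongr, Finset.subtypeInsertEquivOption, Equiv.piOptionEquivProd, hia]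
    have key : ∀ x : ℕ × (↥S' → ℕ),
        ∏ m ∈ (insert a S').attach, F ↑m (e.symm x m)
          = F a x.1 * ∏ m ∈ S'.attach, F ↑m (x.2 m) := by
      intro x
      rw [prod_attach_ext, prod_attach_ext, Finset.prod_insert ha]
      congr 1
      · congr 1
        rw [pext, dif_pos (mem_insert_self a S')]
        exact hsymm_a x
      · apply Finset.prod_congr rfl
        intro i hi
        congr 1
        rw [pext, pext, dif_pos (mem_insert_of_mem hi), dif_pos hi]
        exact hsymm_mem x i hi
    have hnsum : Summable (fun x : ℕ × (↥S' → ℕ) =>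
        ‖F a x.1 * ∏ m ∈ S'.attach, F ↑m (x.2 m)‖) := by
      have h2 := Summable.mul_of_nonneg (hF a) IH.1 (fun j => norm_nonneg _)
        (fun q => norm_nonneg _)
      apply h2.congr
      intro x
      exact (norm_mul _ _).symm
    constructor
    · rw [← Equiv.summable_iff e.symm]
      apply Summable.congr hnsum
      intro x
      simp only [Function.comp_apply]
      rw [key x]
    · rw [← Equiv.tsum_eq e.symm]
      rw [tsum_congr key]
      rw [← tsum_mul_tsum_of_summable_norm (hF a) IH.1]
      rw [IH.2, Finset.prod_insert ha]

noncomputable def gg (s : ℝ) (t : ℕ → ℝ) (z : ℂ) (d : ℕ →₀ ℕ) : ℂ :=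
  ∏ m ∈ d.support, czz s t z m (d m)
lemma czz_zero (s : ℝ) (t : ℕ → ℝ) (z : ℂ) (m : ℕ) : czz s t z m 0 = 1 := by
  simp [czz, cc]
lemma gg_eq_attach (s : ℝ) (t : ℕ → ℝ) (z : ℂ) (S : Finset ℕ) (d : ℕ →₀ ℕ)
    (hd : d.support ⊆ S) :
    gg s t z d = ∏ m ∈ S.attach, czz s t z ↑m (d ↑m) := by
  rw [gg, Finset.prod_attach S (fun i => czz s t z i (d i))]
  apply Finset.prod_subset hd
  intro x _ hx
  rw [Finsupp.notMem_support_iff.mp hx, czz_zero]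
lemma tsum_norm_czz_nonneg (s : ℝ) (t : ℕ → ℝ) (z : ℂ) (m : ℕ) :
    0 ≤ ∑' j, ‖czz s t z m j‖ := tsum_nonneg (fun j => norm_nonneg _)

/-- norm-version of finDistrib without outer norms -/
lemma finDistribNorm {s : ℝ} (hs : 1 < s) (t : ℕ → ℝ) (ht : ∀ m, |t m| ≤ 1) {z : ℂ}
    (hz : ‖z‖ < 1) (S : Finset ℕ) :
    Summable (fun p : ↥S → ℕ => ∏ m ∈ S.attach, ‖czz s t z ↑m (p m)‖) ∧
      ∑' p : ↥S → ℕ, ∏ m ∈ S.attach, ‖czz s t z ↑m (p m)‖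
        = ∏ m ∈ S, ∑' j, ‖czz s t z m j‖ := by
  have hF : ∀ m, Summable fun j => ‖‖czz s t z m j‖‖ := by
    intro m
    apply (summable_norm_czz hs t ht hz m).congr
    intro j
    rw [Real.norm_eq_abs, abs_of_nonneg (norm_nonneg _)]
  have h := finDistrib (fun m j => ‖czz s t z m j‖) hF S
  constructor
  · apply h.1.congr
    intro p
    rw [Real.norm_eq_abs, abs_of_nonneg (Finset.prod_nonneg (fun m _ => norm_nonneg _))]
  · exact h.2
lemma summable_norm_gg {s : ℝ} (hs : 1 < s) (t : ℕ → ℝ) (ht : ∀ m, |t m| ≤ 1) {z : ℂ}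
    (hz : ‖z‖ < 1) :
    Summable (fun d : ℕ →₀ ℕ => ‖gg s t z d‖) := by
  set u : ℝ := ‖z‖ * (1 - ‖z‖)⁻¹ with hu
  have hu0 : 0 ≤ u := by
    rw [hu]
    have : (0:ℝ) ≤ (1 - ‖z‖)⁻¹ := by
      apply inv_nonneg.mpr; linarith
    positivity
  have hbase : Summable (fun m : ℕ => ((m:ℝ)^s)⁻¹ * u) :=
    (Real.summable_nat_rpow_inv.mpr hs).mul_right u
  set B : ℝ := Real.exp (∑' m : ℕ, ((m:ℝ)^s)⁻¹ * u) with hB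
  apply summable_of_sum_le (fun d => norm_nonneg _)
  intro T
  set S : Finset ℕ := T.sup Finsupp.support with hS
  have hsubT : ∀ d ∈ T, d.support ⊆ S := fun d hd => Finset.le_sup hd
  set ι : (ℕ →₀ ℕ) → (↥S → ℕ) := fun d m => d ↑m with hι
  have hinj : ∀ d ∈ T, ∀ d' ∈ T, ι d = ι d' → d = d' := by
    intro d hd d' hd' h
    ext i
    by_cases hi : i ∈ S
    · exact congrFun h ⟨i, hi⟩
    · rw [Finsupp.notMem_support_iff.mp (fun hmem => hi (hsubT d hd hmem)),
        Finsupp.notMem_support_iff.mp (fun hmem => hi (hsubT d' hd' hmem))]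
  have hterm : ∀ d ∈ T, ‖gg s t z d‖ = ∏ m ∈ S.attach, ‖czz s t z ↑m (d ↑m)‖ := by
    intro d hd
    rw [gg_eq_attach s t z S d (hsubT d hd), norm_prod]
  have hFD := finDistribNorm hs t ht hz S
  calc ∑ d ∈ T, ‖gg s t z d‖
      = ∑ d ∈ T, ∏ m ∈ S.attach, ‖czz s t z ↑m ((ι d) m)‖ :=
        Finset.sum_congr rfl hterm
    _ = ∑ p ∈ T.image ι, ∏ m ∈ S.attach, ‖czz s t z ↑m (p m)‖ :=
        (Finset.sum_image (f := fun p : ↥S → ℕ => ∏ m ∈ S.attach, ‖czz s t z ↑m (p m)‖) hinj).symm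
    _ ≤ ∑' p : ↥S → ℕ, ∏ m ∈ S.attach, ‖czz s t z ↑m (p m)‖ := by
        apply Summable.sum_le_tsum _ (fun p _ => Finset.prod_nonneg (fun m _ => norm_nonneg _)) hFD.1
    _ = ∏ m ∈ S, ∑' j, ‖czz s t z m j‖ := hFD.2
    _ ≤ ∏ m ∈ S, Real.exp (((m:ℝ)^s)⁻¹ * u) := by
        apply Finset.prod_le_prod (fun m _ => tsum_norm_czz_nonneg s t z m)
        intro m _
        refine le_trans (tsum_norm_czz_le hs t ht hz m) ?_
        rw [← hu]
        have := Real.add_one_le_exp (((m:ℝ)^s)⁻¹ * u)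
        linarith
    _ = Real.exp (∑ m ∈ S, ((m:ℝ)^s)⁻¹ * u) := (Real.exp_sum S _).symm
    _ ≤ B := by
        rw [hB]
        apply Real.exp_le_exp.mpr
        exact Summable.sum_le_tsum S (fun m _ => by positivity) hbase
lemma hasProd_gg {s : ℝ} (hs : 1 < s) (t : ℕ → ℝ) (ht : ∀ m, |t m| ≤ 1) {z : ℂ}
    (hz : ‖z‖ < 1) :
    HasProd (prodFactor s t z) (∑' d, gg s t z d) := by
  classical
  have hsum_g : Summable (gg s t z) := (summable_norm_gg hs t ht hz).of_norm
  have step1 : ∀ S : Finset ℕ, ∏ m ∈ S, prodFactor s t z m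
      = ∑' x : {d : ℕ →₀ ℕ // ↑d.support ⊆ (↑S : Set ℕ)}, gg s t z ↑x := by
    intro S
    have h1 : ∏ m ∈ S, prodFactor s t z m = ∏ m ∈ S, ∑' j, czz s t z m j :=
      Finset.prod_congr rfl (fun m _ => ((hasSum_czz hs t ht hz m).tsum_eq).symm)
    have hFD := finDistrib (czz s t z) (fun m => summable_norm_czz hs t ht hz m) S
    rw [h1, ← hFD.2]
    set E : {d : ℕ →₀ ℕ // ↑d.support ⊆ (↑S : Set ℕ)} ≃ (↥S → ℕ) :=
      (Finsupp.restrictSupportEquiv ((↑S : Set ℕ)) ℕ).trans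
        ((Finsupp.equivFunOnFinite (α := ((↑S : Set ℕ) : Type))).trans
        (Equiv.arrowCongr (Equiv.subtypeEquivRight (p := fun x => x ∈ (↑S : Set ℕ))
          (q := fun x => x ∈ S) (fun x => Iff.rfl)) (Equiv.refl ℕ)))
      with hE
    have hEval : ∀ (x : {d : ℕ →₀ ℕ // ↑d.support ⊆ (↑S : Set ℕ)}) (m : ↥S),
        E x m = (x : ℕ →₀ ℕ) ↑m := by
      intro x m
      simp [hE, Finsupp.restrictSupportEquiv, Finsupp.equivFunOnFinite,
        Equiv.subtypeEquivRight, Finsupp.subtypeDomain]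
      rfl
    rw [← Equiv.tsum_eq E (fun p => ∏ m ∈ S.attach, czz s t z ↑m (p m))]
    apply tsum_congr
    intro x
    rw [gg_eq_attach s t z S ↑x (fun i hi => x.2 hi)]
    apply Finset.prod_congr rfl
    intro m _
    rw [hEval x m]
  have step2 : Tendsto (fun S : Finset ℕ =>
      ∑' x : {d : ℕ →₀ ℕ // ↑d.support ⊆ (↑S : Set ℕ)}, gg s t z ↑x) atTop
      (𝓝 (∑' d, gg s t z d)) := by
    rw [Metric.tendsto_atTop]
    intro ε hε
    have htail := tendsto_tsum_compl_atTop_zero (fun d : ℕ →₀ ℕ => ‖gg s t z d‖)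
    rw [Metric.tendsto_atTop] at htail
    obtain ⟨T, hT⟩ := htail ε hε
    have hTT := hT T le_rfl
    rw [Real.dist_eq, sub_zero] at hTT
    have hTT' : ∑' x : {d : ℕ →₀ ℕ // d ∉ T}, ‖gg s t z ↑x‖ < ε := by
      refine lt_of_le_of_lt (le_abs_self _) hTT
    refine ⟨T.sup Finsupp.support, fun S hS => ?_⟩
    rw [dist_eq_norm]
    set A : Set (ℕ →₀ ℕ) := {d | ↑d.support ⊆ (↑S : Set ℕ)} with hA
    have hsplit := Summable.tsum_subtype_add_tsum_subtype_compl hsum_g A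
    have : (∑' x : A, gg s t z ↑x) - (∑' d, gg s t z d) = -∑' x : ↥Aᶜ, gg s t z ↑x := by
      rw [← hsplit]; ring
    rw [show ‖(∑' x : {d : ℕ →₀ ℕ // ↑d.support ⊆ (↑S : Set ℕ)}, gg s t z ↑x)
        - ∑' d, gg s t z d‖ = ‖(∑' x : ↥A, gg s t z ↑x) - ∑' d, gg s t z d‖ from rfl,
      this, norm_neg]
    have hsub : ∀ d : ℕ →₀ ℕ, d ∈ Aᶜ → d ∉ T := by
      intro d hd hdT
      apply hd
      rw [hA, Set.mem_setOf_eq]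
      intro i hi
      have h1 : d.support ⊆ T.sup Finsupp.support := Finset.le_sup hdT
      have h2 : (T.sup Finsupp.support : Finset ℕ) ⊆ S := hS
      exact Finset.mem_coe.mpr (h2 (h1 hi))
    refine lt_of_le_of_lt ?_ hTT'
    refine le_trans (norm_tsum_le_tsum_norm ((summable_norm_gg hs t ht hz).subtype _)) ?_
    apply Summable.tsum_le_tsum_of_inj (fun x => ⟨↑x, hsub ↑x x.2⟩)
    · intro x y hxy
      have h3 : (↑x : ℕ →₀ ℕ) = ↑y := congrArg (fun a : {d : ℕ →₀ ℕ // d ∉ T} => (a : ℕ →₀ ℕ)) hxy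
      exact Subtype.ext h3
    · intro c _
      exact norm_nonneg _
    · intro b
      exact le_rfl
    · exact (summable_norm_gg hs t ht hz).subtype _
    · exact (summable_norm_gg hs t ht hz).subtype _
  rw [HasProd]
  apply step2.congr
  intro S
  exact (step1 S).symm

lemma abs_wt_le (t : ℕ → ℝ) (ht : ∀ m, |t m| ≤ 1) {k : ℕ} (f : Fin k → ℕ) :
    |wt t f| ≤ 1 := by
  rw [wt, Finset.abs_prod]
  apply Finset.prod_le_one (fun r _ => abs_nonneg _)
  intro r _
  split_ifs with h h2
  · exact ht _
  · simp
  · simp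
lemma summable_phi {s : ℝ} (hs : 1 < s) (k : ℕ) :
    Summable (fun f : Fin k → ℕ => ∏ j : Fin k, ((f j : ℝ)^s)⁻¹) := by
  induction k with
  | zero =>
    exact (hasSum_single (f := fun f : Fin 0 → ℕ => ∏ j : Fin 0, ((f j : ℝ)^s)⁻¹)
      default (fun b hb => absurd (Subsingleton.elim b default) hb)).summable
  | succ k IH =>
    have hbase : Summable (fun n : ℕ => ((n:ℝ)^s)⁻¹) := Real.summable_nat_rpow_inv.mpr hs
    have hprod := Summable.mul_of_nonneg hbase IH
      (fun n => by positivity) (fun p => Finset.prod_nonneg (fun j _ => by positivity))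
    set e := (Fin.consEquiv (fun _ : Fin (k+1) => ℕ)).symm with he
    rw [← Equiv.summable_iff e.symm]
    apply hprod.congr
    intro x
    simp only [Function.comp_apply, he, Equiv.symm_symm, Fin.consEquiv_apply]
    rw [Fin.prod_univ_succ]
    simp [Fin.cons_zero, Fin.cons_succ]
lemma summable_zeta (s : ℝ) (t : ℕ → ℝ) (hs : 1 < s) (ht : ∀ m, |t m| ≤ 1) (k : ℕ) :
    Summable (fun f : Fin k → ℕ => zetaTerm s t f) := by
  apply Summable.of_norm_bounded (summable_phi hs k)
  intro f
  rw [Real.norm_eq_abs, zetaTerm]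
  split_ifs with h
  · rw [abs_mul, abs_of_nonneg (Finset.prod_nonneg (fun j _ => by positivity :
      ∀ j ∈ Finset.univ, (0:ℝ) ≤ ((f j : ℝ)^s)⁻¹))]
    calc |wt t f| * ∏ j : Fin k, ((f j : ℝ)^s)⁻¹ ≤ 1 * ∏ j : Fin k, ((f j : ℝ)^s)⁻¹ :=
          mul_le_mul_of_nonneg_right (abs_wt_le t ht f)
            (Finset.prod_nonneg (fun j _ => by positivity))
      _ = _ := one_mul _
  · simp
    positivity

noncomputable def listTerm (s : ℝ) (t : ℕ → ℝ) : List ℕ → ℝ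
  | [] => 1
  | [a] => ((a:ℝ)^s)⁻¹
  | a :: b :: l => ((a:ℝ)^s)⁻¹ * (if a = b then t a else 1) * listTerm s t (b :: l)
lemma listTerm_nil (s : ℝ) (t : ℕ → ℝ) : listTerm s t [] = 1 := rfl
lemma listTerm_single (s : ℝ) (t : ℕ → ℝ) (a : ℕ) : listTerm s t [a] = ((a:ℝ)^s)⁻¹ := rfl
lemma listTerm_cons2 (s : ℝ) (t : ℕ → ℝ) (a b : ℕ) (l : List ℕ) :
    listTerm s t (a :: b :: l) = ((a:ℝ)^s)⁻¹ * (if a = b then t a else 1) * listTerm s t (b :: l) := rfl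
lemma wt_zero (t : ℕ → ℝ) (f : Fin 0 → ℕ) : wt t f = 1 := by simp [wt]
lemma wt_one (t : ℕ → ℝ) (f : Fin 1 → ℕ) : wt t f = 1 := by simp [wt]
lemma wt_succ (t : ℕ → ℝ) {k : ℕ} (f : Fin (k+2) → ℕ) :
    wt t f = (if f 0 = f 1 then t (f 1) else 1) * wt t (fun j : Fin (k+1) => f j.succ) := by
  rw [wt, Finset.prod_range_succ']
  rw [mul_comm]
  congr 1
  · rw [wt]
    apply Finset.prod_congr rfl
    intro r hr
    by_cases h : r + 1 < k + 1
    · rw [dif_pos (by omega : r + 1 + 1 < k + 2), dif_pos h]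
      rfl
    · rw [dif_neg (by omega), dif_neg h]
lemma zeta_prod_eq_listTerm (s : ℝ) (t : ℕ → ℝ) :
    ∀ (k : ℕ) (f : Fin k → ℕ),
      wt t f * ∏ j : Fin k, ((f j : ℝ)^s)⁻¹ = listTerm s t (List.ofFn f) := by
  intro k
  induction k using Nat.twoStepInduction with
  | zero =>
    intro f
    simp [wt_zero, listTerm_nil]
  | one =>
    intro f
    rw [wt_one]
    rw [show List.ofFn f = [f 0] by simp [List.ofFn_succ]]
    rw [listTerm_single]
    simp
  | more k _ IH =>
    intro f
    set g : Fin (k+1) → ℕ := fun j => f j.succ with hg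
    have hofn : List.ofFn f = f 0 :: f 1 :: List.ofFn (fun j : Fin k => g j.succ) := by
      rw [List.ofFn_succ, List.ofFn_succ]
      congr 1
    have hofn2 : List.ofFn g = f 1 :: List.ofFn (fun j : Fin k => g j.succ) := by
      rw [List.ofFn_succ]
      congr 1
    rw [hofn, listTerm_cons2, ← hofn2, ← IH g, wt_succ, Fin.prod_univ_succ]
    have hif : (if f 0 = f 1 then t (f 0) else 1) = (if f 0 = f 1 then t (f 1) else 1) := by
      split_ifs with h
      · rw [h]
      · rfl
    rw [hif]
    rw [hg]
    ring_nf
lemma cc_one' (s : ℝ) (t : ℕ → ℝ) (m : ℕ) : cc s t m 1 = ((m:ℝ)^s)⁻¹ := by simp [cc]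
lemma cc_succ' (s : ℝ) (t : ℕ → ℝ) (m j : ℕ) (hj : 1 ≤ j) :
    cc s t m (j+1) = (((m:ℝ)^s)⁻¹ * t m) * cc s t m j := by
  obtain ⟨i, rfl⟩ := Nat.exists_eq_add_of_le hj
  simp [cc, pow_succ]
  ring
lemma listTerm_sorted (s : ℝ) (t : ℕ → ℝ) :
    ∀ l : List ℕ, List.Pairwise (· ≥ ·) l →
      listTerm s t l = ∏ m ∈ l.toFinset, cc s t m (l.count m) := by
  intro l
  induction l with
  | nil => intro _; simp [listTerm_nil]
  | cons a l IH =>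
    intro hsort
    match l with
    | [] => simp [listTerm_single, cc_one']
    | b :: l' =>
      have hsort' : List.Pairwise (· ≥ ·) (b :: l') := (List.pairwise_cons.mp hsort).2
      have hab' : a ≥ b := (List.pairwise_cons.mp hsort).1 b List.mem_cons_self
      have hIH := IH hsort'
      by_cases hab : a = b
      · subst hab
        set X := (a :: l').toFinset with hX
        have haX : a ∈ X := by simp [hX]
        have hcnt : 1 ≤ (a :: l').count a := by
          rw [List.count_cons_self]; omega
        rw [listTerm_cons2, if_pos rfl, hIH]
        have htf : (a :: a :: l').toFinset = X := by
          simp [hX, List.toFinset_cons]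
        rw [htf]
        rw [Finset.prod_eq_mul_prod_sdiff_singleton_of_mem haX
          (fun m => cc s t m ((a :: a :: l').count m)),
          Finset.prod_eq_mul_prod_sdiff_singleton_of_mem haX
          (fun m => cc s t m ((a :: l').count m))]
        have h1 : (a :: a :: l').count a = (a :: l').count a + 1 := List.count_cons_self
        have h2 : ∀ m ∈ X \ {a}, cc s t m ((a :: a :: l').count m)
            = cc s t m ((a :: l').count m) := by
          intro m hm
          have hma : m ≠ a := by
            intro h; rw [h] at hm; simp at hm
          congr 1
          exact List.count_cons_of_ne hma.symm
        rw [Finset.prod_congr rfl h2, h1, cc_succ' s t a _ hcnt]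
        ring
      · have hanl : a ∉ (b :: l') := by
          intro hmem
          rcases List.mem_cons.mp hmem with h | h
          · exact hab h
          · have := (List.pairwise_cons.mp hsort').1 a h
            omega
        rw [listTerm_cons2, if_neg hab, hIH]
        have htf : (a :: b :: l').toFinset = insert a ((b :: l').toFinset) :=
          List.toFinset_cons
        rw [htf, Finset.prod_insert (fun h => hanl (List.mem_toFinset.mp h))]
        have hca : (a :: b :: l').count a = 1 := by
          rw [List.count_cons_self, List.count_eq_zero.mpr hanl]
        have h2 : ∀ m ∈ (b :: l').toFinset, cc s t m ((a :: b :: l').count m)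
            = cc s t m ((b :: l').count m) := by
          intro m hm
          have hma : m ≠ a := by
            intro h; subst h; exact hanl (List.mem_toFinset.mp hm)
          congr 1
          exact List.count_cons_of_ne hma.symm
        rw [Finset.prod_congr rfl h2, hca, cc_one']
        ring
noncomputable def ww (s : ℝ) (t : ℕ → ℝ) (d : ℕ →₀ ℕ) : ℝ :=
  ∏ m ∈ d.support, cc s t m (d m)
def fdeg (d : ℕ →₀ ℕ) : ℕ := d.sum fun _ n => n
noncomputable def sortedList (d : ℕ →₀ ℕ) : List ℕ :=
  Multiset.sort (Finsupp.toMultiset d) (· ≥ ·)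
lemma sortedList_length (d : ℕ →₀ ℕ) : (sortedList d).length = fdeg d := by
  rw [sortedList, Multiset.length_sort, Finsupp.card_toMultiset]; rfl
lemma sortedList_sorted (d : ℕ →₀ ℕ) : List.Pairwise (· ≥ ·) (sortedList d) :=
  Multiset.pairwise_sort _ _
lemma sortedList_coe (d : ℕ →₀ ℕ) : (↑(sortedList d) : Multiset ℕ) = Finsupp.toMultiset d :=
  Multiset.sort_eq _ _
lemma sortedList_count (d : ℕ →₀ ℕ) (m : ℕ) : (sortedList d).count m = d m := by
  rw [← Multiset.coe_count, sortedList_coe, Finsupp.count_toMultiset]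
lemma sortedList_mem (d : ℕ →₀ ℕ) (m : ℕ) : m ∈ sortedList d ↔ m ∈ d.support := by
  rw [← Multiset.mem_coe, sortedList_coe, Finsupp.mem_toMultiset]
lemma sortedList_toFinset (d : ℕ →₀ ℕ) : (sortedList d).toFinset = d.support := by
  ext m
  rw [List.mem_toFinset, sortedList_mem]
noncomputable def tupleOf (d : ℕ →₀ ℕ) (k : ℕ) (h : fdeg d = k) : Fin k → ℕ :=
  fun j => (sortedList d).get (Fin.cast (by rw [sortedList_length, h]) j)
lemma ofFn_get_cast (l : List ℕ) (k : ℕ) (h : k = l.length) :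
    List.ofFn (fun j : Fin k => l.get (Fin.cast h j)) = l := by
  subst h
  have heq : (fun j : Fin l.length => l.get (Fin.cast rfl j)) = l.get :=
    funext fun j => congrArg l.get (Fin.ext rfl)
  rw [heq, List.ofFn_get]
lemma ofFn_tupleOf (d : ℕ →₀ ℕ) (k : ℕ) (h : fdeg d = k) :
    List.ofFn (tupleOf d k h) = sortedList d :=
  ofFn_get_cast (sortedList d) k (by rw [sortedList_length, h])
lemma tupleOf_cond (d : ℕ →₀ ℕ) (k : ℕ) (h : fdeg d = k) (h0 : 0 ∉ d.support) :
    (∀ j, 1 ≤ tupleOf d k h j) ∧ (∀ i j : Fin k, i ≤ j → tupleOf d k h j ≤ tupleOf d k h i) := by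
  constructor
  · intro j
    have hmem : tupleOf d k h j ∈ sortedList d := by
      rw [tupleOf]
      exact List.get_mem _ _
    have := (sortedList_mem d _).mp hmem
    rcases Nat.eq_zero_or_pos (tupleOf d k h j) with hz | hp
    · rw [hz] at this; exact absurd this h0
    · exact hp
  · intro i j hij
    rcases eq_or_lt_of_le hij with rfl | hlt
    · exact le_rfl
    · have hp := (List.pairwise_iff_get.mp (sortedList_sorted d))
        (Fin.cast (by rw [sortedList_length, h]) i) (Fin.cast (by rw [sortedList_length, h]) j)
        (by simpa using hlt)
      exact hp
lemma zeta_eq_ww (s : ℝ) (t : ℕ → ℝ) (d : ℕ →₀ ℕ) (k : ℕ) (h : fdeg d = k)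
    (h0 : 0 ∉ d.support) :
    zetaTerm s t (tupleOf d k h) = ww s t d := by
  rw [zetaTerm, if_pos (tupleOf_cond d k h h0)]
  rw [zeta_prod_eq_listTerm s t k (tupleOf d k h), ofFn_tupleOf]
  rw [listTerm_sorted s t _ (sortedList_sorted d), sortedList_toFinset]
  exact Finset.prod_congr rfl (fun m _ => by rw [sortedList_count])
lemma tuple_inj (d d' : ℕ →₀ ℕ) (k : ℕ) (h : fdeg d = k) (h' : fdeg d' = k)
    (heq : tupleOf d k h = tupleOf d' k h') : d = d' := by
  have h1 : sortedList d = sortedList d' := by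
    rw [← ofFn_tupleOf d k h, ← ofFn_tupleOf d' k h', heq]
  have h2 : Finsupp.toMultiset d = Finsupp.toMultiset d' := by
    rw [← sortedList_coe, ← sortedList_coe, h1]
  have := congrArg Multiset.toFinsupp h2
  rwa [Finsupp.toMultiset_toFinsupp, Finsupp.toMultiset_toFinsupp] at this
lemma tuple_surj (k : ℕ) (f : Fin k → ℕ) (h1 : ∀ j, 1 ≤ f j)
    (h2 : ∀ i j : Fin k, i ≤ j → f j ≤ f i) :
    ∃ (d : ℕ →₀ ℕ) (hdeg : fdeg d = k), 0 ∉ d.support ∧ tupleOf d k hdeg = f := by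
  classical
  set M : Multiset ℕ := ↑(List.ofFn f) with hM
  refine ⟨Multiset.toFinsupp M, ?_, ?_, ?_⟩
  case _ =>
    show fdeg (Multiset.toFinsupp M) = k
    have : Multiset.card (Finsupp.toMultiset (Multiset.toFinsupp M)) = k := by
      rw [Multiset.toFinsupp_toMultiset, hM, Multiset.coe_card, List.length_ofFn]
    rw [← this, Finsupp.card_toMultiset]; rfl
  case _ =>
    intro hmem
    have : (Multiset.toFinsupp M) 0 ≠ 0 := Finsupp.mem_support_iff.mp hmem
    apply this
    rw [Multiset.toFinsupp_apply, hM, Multiset.coe_count, List.count_eq_zero]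
    intro hmem0
    obtain ⟨j, hj⟩ := Set.mem_range.mp ((List.mem_ofFn' f 0).mp hmem0)
    have := h1 j
    omega
  case _ =>
    have hsd : sortedList (Multiset.toFinsupp M) = List.ofFn f := by
      refine (fun hp h1 h2 => List.Perm.eq_of_pairwise' (r := (· ≥ ·)) h1 h2 hp) ?_ ?_ ?_
      · apply Multiset.coe_eq_coe.mp
        rw [sortedList_coe, Multiset.toFinsupp_toMultiset, hM]
      · exact sortedList_sorted _
      · apply List.pairwise_iff_get.mpr
        intro i j hij
        rw [List.get_ofFn, List.get_ofFn]
        apply h2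
        apply le_of_lt
        simpa using hij
    funext j
    rw [tupleOf, List.get_of_eq hsd, List.get_ofFn]
    exact congrArg f (Fin.ext rfl)
lemma cc_zero_eq (s : ℝ) (hs : 1 < s) (t : ℕ → ℝ) (j : ℕ) (hj : 1 ≤ j) : cc s t 0 j = 0 := by
  rw [cc, if_neg (by omega)]
  rw [Nat.cast_zero, Real.zero_rpow (by linarith : s ≠ 0)]
  simp
lemma ww_zero_of_zero_mem (s : ℝ) (hs : 1 < s) (t : ℕ → ℝ) (d : ℕ →₀ ℕ)
    (h0 : 0 ∈ d.support) : ww s t d = 0 := by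
  apply Finset.prod_eq_zero h0
  exact cc_zero_eq s hs t (d 0) (Nat.one_le_iff_ne_zero.mpr (Finsupp.mem_support_iff.mp h0))
lemma hasSum_fiber (s : ℝ) (t : ℕ → ℝ) (hs : 1 < s) (ht : ∀ m, |t m| ≤ 1) (k : ℕ) :
    HasSum (fun x : {d : ℕ →₀ ℕ // fdeg d = k} => ww s t ↑x)
      (∑' f : Fin k → ℕ, zetaTerm s t f) := by
  set G : {d : ℕ →₀ ℕ // fdeg d = k} → ℝ := fun x => ww s t ↑x with hG
  have hzsum : HasSum (fun f : Fin k → ℕ => zetaTerm s t f)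
      (∑' f : Fin k → ℕ, zetaTerm s t f) := (summable_zeta s t hs ht k).hasSum
  set i : ↥(Function.support G) → (Fin k → ℕ) :=
    fun x => tupleOf ↑(↑x : {d : ℕ →₀ ℕ // fdeg d = k}) k
      (↑x : {d : ℕ →₀ ℕ // fdeg d = k}).2 with hi
  have h0 : ∀ x : ↥(Function.support G), (0:ℕ) ∉ ((↑x : {d : ℕ →₀ ℕ // fdeg d = k}) : ℕ →₀ ℕ).support := by
    intro x hmem
    exact x.2 (ww_zero_of_zero_mem s hs t _ hmem)
  refine (hasSum_iff_hasSum_of_ne_zero_bij i ?_ ?_ ?_).mp hzsum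
  · intro x y hxy
    have hd := tuple_inj _ _ k (↑x : {d : ℕ →₀ ℕ // fdeg d = k}).2
      (↑y : {d : ℕ →₀ ℕ // fdeg d = k}).2 hxy
    exact Subtype.ext (Subtype.ext hd)
  · intro f hf
    have hcond : (∀ j, 1 ≤ f j) ∧ (∀ i j : Fin k, i ≤ j → f j ≤ f i) := by
      by_contra hc
      apply hf
      show (if (∀ j, 1 ≤ f j) ∧ (∀ i j : Fin k, i ≤ j → f j ≤ f i) then
        wt t f * ∏ j : Fin k, ((f j : ℝ) ^ s)⁻¹ else 0) = 0
      exact if_neg hc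
    obtain ⟨d, hdeg, hd0, hdf⟩ := tuple_surj k f hcond.1 hcond.2
    have hwwne : G ⟨d, hdeg⟩ ≠ 0 := by
      rw [hG]
      show ww s t d ≠ 0
      rw [← zeta_eq_ww s t d k hdeg hd0, hdf]
      exact hf
    exact ⟨⟨⟨d, hdeg⟩, hwwne⟩, hdf⟩
  · intro x
    exact zeta_eq_ww s t _ k _ (h0 x)
lemma gg_eq_ww (s : ℝ) (t : ℕ → ℝ) (z : ℂ) (d : ℕ →₀ ℕ) :
    gg s t z d = ((ww s t d : ℝ) : ℂ) * z ^ (fdeg d) := by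
  rw [gg, ww, Complex.ofReal_prod]
  have hz : z ^ fdeg d = ∏ m ∈ d.support, z ^ (d m) :=
    (Finset.prod_pow_eq_pow_sum d.support (fun m => d m) z).symm
  rw [hz, ← Finset.prod_mul_distrib]
  exact Finset.prod_congr rfl (fun m _ => rfl)
lemma hasSum_coeffs (s : ℝ) (t : ℕ → ℝ) (z : ℂ) (hs : 1 < s) (ht : ∀ m, |t m| ≤ 1)
    (hz : ‖z‖ < 1) :
    HasSum (fun k : ℕ => ((∑' f : Fin k → ℕ, zetaTerm s t f : ℝ) : ℂ) * z ^ k)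
      (∑' d, gg s t z d) := by
  have hgsum : Summable (gg s t z) := (summable_norm_gg hs t ht hz).of_norm
  have h1 : HasSum (gg s t z) (∑' d, gg s t z d) := hgsum.hasSum
  have h2 : HasSum ((gg s t z) ∘ (Equiv.sigmaFiberEquiv fdeg))
      (∑' d, gg s t z d) := (Equiv.hasSum_iff _).mpr h1
  apply h2.sigma
  intro k
  have h3 := hasSum_fiber s t hs ht k
  have h4 : HasSum (fun x : {d : ℕ →₀ ℕ // fdeg d = k} =>
      ((ww s t ↑x : ℝ) : ℂ)) ((∑' f : Fin k → ℕ, zetaTerm s t f : ℝ) : ℂ) :=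
    Complex.hasSum_ofReal.mpr h3
  have h5 := h4.mul_right (z^k)
  have h6 : (fun x : {d : ℕ →₀ ℕ // fdeg d = k} => ((ww s t ↑x : ℝ) : ℂ) * z^k)
      = (fun x : {d : ℕ →₀ ℕ // fdeg d = k} => gg s t z ↑x) := by
    funext x
    rw [gg_eq_ww, x.2]
  show HasSum (fun x : {d : ℕ →₀ ℕ // fdeg d = k} => gg s t z ↑x) _
  rw [← h6]
  exact h5

/-- For `s > 1` and `|t_m| ≤ 1`: each `ζ^{t}({s}_k)` is a convergent series, the
infinite product `∏_{m≥1} (1 + m^{-s}z/(1 - m^{-s}t_m z))` converges for `|z| < 1`,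
and its Taylor coefficients are the values `ζ^{t}({s}_k)`. -/
theorem infinite_product_generating_function
    (s : ℝ) (hs : 1 < s) (t : ℕ → ℝ) (ht : ∀ m, |t m| ≤ 1) :
    (∀ k : ℕ, Summable (fun f : Fin k → ℕ => zetaTerm s t f)) ∧
    ∀ z : ℂ, ‖z‖ < 1 →
      Multipliable (prodFactor s t z) ∧
      HasSum (fun k : ℕ => ((∑' f : Fin k → ℕ, zetaTerm s t f : ℝ) : ℂ) * z ^ k)
        (∏' m : ℕ, prodFactor s t z m) := by
  constructor
  · exact summable_zeta s t hs ht
  · intro z hz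
    have hp := hasProd_gg hs t ht hz
    refine ⟨⟨_, hp⟩, ?_⟩
    rw [hp.tprod_eq]
    exact hasSum_coeffs s t z hs ht hz
end
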